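/- arXiv:1811.01094 — 3 statements merged into one kernel-verified Lean document; each statement's English description precedes it below -/
import Mathlib

section
/- Let α = (I^g, α^g)_{g∈mor(𝒢)} be a partial action of a groupoid 𝒢 on an R-semicategory C. Then α is global if and only if I^g = I^{r(g)} (as families of submodules) and C₀^g = C₀^{r(g)} for every g ∈ mor(𝒢). -/
open scoped Classical

noncomputable section

universe u u₂ v v' w w'

/-- A one-sorted (algebraic) groupoid: a set `G` of morphisms with a
partially defined multiplication (`comp g h` meaning `d g = r h`), a total
extension `mul` of it, and inversion. -/
structure AlgGroupoid (G : Type u₂) where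
  mul : G → G → G
  inv : G → G
  comp : G → G → Prop
  comp_iff : ∀ g h, comp g h ↔ mul (inv g) g = mul h (inv h)
  mul_assoc' : ∀ g h k, comp g h → comp h k → mul (mul g h) k = mul g (mul h k)
  comp_mul_left : ∀ g h k, comp g h → comp h k → comp (mul g h) k
  comp_mul_right : ∀ g h k, comp g h → comp h k → comp g (mul h k)
  inv_inv' : ∀ g, inv (inv g) = g
  comp_inv_left : ∀ g, comp (inv g) g
  comp_inv_right : ∀ g, comp g (inv g)
  inv_mul_cancel' : ∀ g h, comp g h → mul (inv g) (mul g h) = h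
  mul_inv_cancel' : ∀ g h, comp g h → mul (mul g h) (inv h) = g
  inv_mul' : ∀ g h, comp g h → inv (mul g h) = mul (inv h) (inv g)

namespace AlgGroupoid

variable {G : Type u₂}

/-- The domain identity `d g = g⁻¹ g`. -/
def d (𝒢 : AlgGroupoid G) (g : G) : G := 𝒢.mul (𝒢.inv g) g

/-- The range identity `r g = g g⁻¹`. -/
def r (𝒢 : AlgGroupoid G) (g : G) : G := 𝒢.mul g (𝒢.inv g)

/-- The set of identities `𝒢₀` of the groupoid. -/
def units (𝒢 : AlgGroupoid G) : Set G := {e | ∃ g, e = 𝒢.d g}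

/-- A partial action of a groupoid `𝒢` on the subset `X` of the type `Y`:
the data is a family of domains `D g ⊆ X` and a (total extension of a)
family of maps `act g : D g⁻¹ → D g`. -/
def IsPartialActionOn {Y : Type v} (𝒢 : AlgGroupoid G)
    (X : Set Y) (D : G → Set Y) (act : G → Y → Y) : Prop :=
  (∀ g, D g ⊆ X) ∧
  (∀ g, D g ⊆ D (𝒢.r g)) ∧
  (∀ x ∈ X, ∃ e ∈ 𝒢.units, x ∈ D e) ∧
  (∀ e ∈ 𝒢.units, ∀ x ∈ D e, act e x = x) ∧
  (∀ g, ∀ x ∈ D (𝒢.inv g), act g x ∈ D g) ∧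
  (∀ g, ∀ x ∈ D (𝒢.inv g), act (𝒢.inv g) (act g x) = x) ∧
  (∀ g h, 𝒢.comp g h → act g '' (D (𝒢.inv g) ∩ D h) = D g ∩ D (𝒢.mul g h)) ∧
  (∀ g h, 𝒢.comp g h → ∀ x ∈ D (𝒢.inv h),
      act h x ∈ D (𝒢.inv g) ∩ D h → act g (act h x) = act (𝒢.mul g h) x)

/-- A partial action of a groupoid on (all of) a set `Y`. -/
def IsSetPartialAction {Y : Type v} (𝒢 : AlgGroupoid G)
    (D : G → Set Y) (act : G → Y → Y) : Prop :=
  𝒢.IsPartialActionOn Set.univ D act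

/-- A partial set action is global when `α_g ∘ α_h = α_{gh}` (as partially
defined maps) for every composable pair `(g, h)`. -/
def SetActionIsGlobal {Y : Type v} (𝒢 : AlgGroupoid G)
    (D : G → Set Y) (act : G → Y → Y) : Prop :=
  ∀ g h, 𝒢.comp g h →
    D (𝒢.inv (𝒢.mul g h)) = {x ∈ D (𝒢.inv h) | act h x ∈ D (𝒢.inv g)} ∧
    ∀ x ∈ D (𝒢.inv (𝒢.mul g h)), act g (act h x) = act (𝒢.mul g h) x

end AlgGroupoid
/-- An `R`-semicategory with object type `Ob`: morphism `R`-modules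
`Hom y x` (the morphisms *from `x` to `y`*, i.e. `_yC_x`) and an
associative `R`-bilinear composition (no identities required). -/
structure RSemicat (R : Type u) [CommRing R] (Ob : Type v) : Type (max u v (w + 1)) where
  Hom : Ob → Ob → Type w
  [homAdd : ∀ y x, AddCommGroup (Hom y x)]
  [homMod : ∀ y x, Module R (Hom y x)]
  comp : ∀ {z y x : Ob}, Hom z y → Hom y x → Hom z x
  comp_assoc : ∀ {v z y x : Ob} (f : Hom v z) (g : Hom z y) (h : Hom y x),
      comp (comp f g) h = comp f (comp g h)
  comp_add_left : ∀ {z y x : Ob} (f f' : Hom z y) (g : Hom y x),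
      comp (f + f') g = comp f g + comp f' g
  comp_add_right : ∀ {z y x : Ob} (f : Hom z y) (g g' : Hom y x),
      comp f (g + g') = comp f g + comp f g'
  comp_smul_left : ∀ {z y x : Ob} (c : R) (f : Hom z y) (g : Hom y x),
      comp (c • f) g = c • comp f g
  comp_smul_right : ∀ {z y x : Ob} (c : R) (f : Hom z y) (g : Hom y x),
      comp f (c • g) = c • comp f g

attribute [instance] RSemicat.homAdd RSemicat.homMod

namespace RSemicat

variable {R : Type u} [CommRing R] {Ob : Type v}

theorem comp_zero_left (C : RSemicat.{u, v, w} R Ob) {z y x : Ob} (g : C.Hom y x) :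
    C.comp (0 : C.Hom z y) g = 0 := by
  have h := C.comp_add_left (0 : C.Hom z y) 0 g
  rw [add_zero] at h
  exact left_eq_add.mp h

theorem comp_zero_right (C : RSemicat.{u, v, w} R Ob) {z y x : Ob} (f : C.Hom z y) :
    C.comp f (0 : C.Hom y x) = 0 := by
  have h := C.comp_add_right f (0 : C.Hom y x) 0
  rw [add_zero] at h
  exact left_eq_add.mp h

/-- An ideal of an `R`-semicategory: a family of submodules closed under
composition with arbitrary morphisms on either side. -/
def IsIdeal (C : RSemicat R Ob) (I : ∀ y x : Ob, Submodule R (C.Hom y x)) : Prop :=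
  (∀ (z y x : Ob) (u : C.Hom z y) (f : C.Hom y x), f ∈ I y x → C.comp u f ∈ I z x) ∧
  (∀ (z y x : Ob) (f : C.Hom z y) (u : C.Hom y x), f ∈ I z y → C.comp f u ∈ I z x)

/-- `J` is an ideal of the ideal `I`: `J ⊆ I` and `J` is closed under
composition with morphisms of `I` on either side. -/
def IsIdealIn (C : RSemicat R Ob) (J I : ∀ y x : Ob, Submodule R (C.Hom y x)) : Prop :=
  (∀ y x, J y x ≤ I y x) ∧
  (∀ (z y x : Ob) (u : C.Hom z y) (f : C.Hom y x), u ∈ I z y → f ∈ J y x → C.comp u f ∈ J z x) ∧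
  (∀ (z y x : Ob) (f : C.Hom z y) (u : C.Hom y x), f ∈ J z y → u ∈ I y x → C.comp f u ∈ J z x)

/-- `u ∈ _xI_x` is a local identity of the ideal `I` at the object `x`. -/
def IsLocalIdentity (C : RSemicat R Ob) (I : ∀ y x : Ob, Submodule R (C.Hom y x))
    (x : Ob) (u : C.Hom x x) : Prop :=
  (∀ (y : Ob) (f : C.Hom x y), f ∈ I x y → C.comp u f = f) ∧
  (∀ (y : Ob) (f : C.Hom y x), f ∈ I y x → C.comp f u = f)

/-- `u ∈ _xI_x` is a left local identity of the ideal `I` at the object `x`. -/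
def IsLeftLocalIdentity (C : RSemicat R Ob) (I : ∀ y x : Ob, Submodule R (C.Hom y x))
    (x : Ob) (u : C.Hom x x) : Prop :=
  ∀ (y : Ob) (f : C.Hom x y), f ∈ I x y → C.comp u f = f

/-- An `R`-semicategory is an `R`-category when every object has an
identity morphism. -/
def HasIdentities (C : RSemicat R Ob) : Prop :=
  ∀ x : Ob, ∃ u : C.Hom x x,
    (∀ (y : Ob) (f : C.Hom x y), C.comp u f = f) ∧
    (∀ (y : Ob) (f : C.Hom y x), C.comp f u = f)

end RSemicat

/-- The raw data of a partial action of a groupoid (with morphism type `G`)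
on an `R`-semicategory `C`: domains `D₀ g` and (total extensions of) maps
`act₀ g` on objects, a family of submodules `I g` (the ideals `I^g`) and
(total extensions of) maps `act g : I^{g⁻¹} → I^g` on morphisms. -/
structure SemicatActionData (R : Type u) [CommRing R] (G : Type u₂) {Ob : Type v}
    (C : RSemicat.{u, v, w} R Ob) where
  D₀ : G → Set Ob
  act₀ : G → Ob → Ob
  I : G → ∀ y x : Ob, Submodule R (C.Hom y x)
  act : ∀ (g : G) {y x : Ob}, C.Hom y x → C.Hom (act₀ g y) (act₀ g x)

variable {R : Type u} [CommRing R] {G : Type u₂} {Ob : Type v}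

/-- Definition of a partial action of a groupoid `𝒢` on an `R`-semicategory `C`. -/
def IsSemicatPartialAction (𝒢 : AlgGroupoid G) (C : RSemicat.{u, v, w} R Ob)
    (a : SemicatActionData R G C) : Prop :=
  -- (i) a partial action on the set of objects
  𝒢.IsSetPartialAction a.D₀ a.act₀ ∧
  -- (ii) `_yI^g_x = 0` unless `{y, x} ⊆ C₀^g`
  (∀ (g : G) (y x : Ob), ¬(y ∈ a.D₀ g ∧ x ∈ a.D₀ g) → a.I g y x = ⊥) ∧
  -- `I^g ⊴ I^{r g} ⊴ C`
  (∀ g : G, C.IsIdealIn (a.I g) (a.I (𝒢.r g))) ∧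
  (∀ g : G, C.IsIdeal (a.I (𝒢.r g))) ∧
  -- (iii) `α^g : I^{g⁻¹} → I^g` is an isomorphism of `R`-semicategories
  (∀ (g : G) (y x : Ob) (f : C.Hom y x), f ∈ a.I (𝒢.inv g) y x →
      a.act g f ∈ a.I g (a.act₀ g y) (a.act₀ g x)) ∧
  (∀ (g : G) (y x : Ob) (f f' : C.Hom y x), f ∈ a.I (𝒢.inv g) y x →
      f' ∈ a.I (𝒢.inv g) y x → a.act g (f + f') = a.act g f + a.act g f') ∧
  (∀ (g : G) (y x : Ob) (c : R) (f : C.Hom y x), f ∈ a.I (𝒢.inv g) y x →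
      a.act g (c • f) = c • a.act g f) ∧
  (∀ (g : G) (y x : Ob) (f f' : C.Hom y x), f ∈ a.I (𝒢.inv g) y x →
      f' ∈ a.I (𝒢.inv g) y x → a.act g f = a.act g f' → f = f') ∧
  (∀ g : G, ∀ y ∈ a.D₀ (𝒢.inv g), ∀ x ∈ a.D₀ (𝒢.inv g),
      ∀ k ∈ a.I g (a.act₀ g y) (a.act₀ g x), ∃ f ∈ a.I (𝒢.inv g) y x, a.act g f = k) ∧
  (∀ (g : G) (z y x : Ob) (f : C.Hom z y) (f' : C.Hom y x), f ∈ a.I (𝒢.inv g) z y →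
      f' ∈ a.I (𝒢.inv g) y x → a.act g (C.comp f f') = C.comp (a.act g f) (a.act g f')) ∧
  -- (iv) `α^e = id` on `I^e` for identities `e`
  (∀ e ∈ 𝒢.units, ∀ (y x : Ob) (f : C.Hom y x), f ∈ a.I e y x → HEq (a.act e f) f) ∧
  -- (v)
  (∀ g h : G, 𝒢.comp g h → ∀ (y x : Ob) (f : C.Hom y x),
      f ∈ a.I h y x → f ∈ a.I (𝒢.inv g) y x →
      a.act (𝒢.inv h) f ∈
        a.I (𝒢.inv (𝒢.mul g h)) (a.act₀ (𝒢.inv h) y) (a.act₀ (𝒢.inv h) x)) ∧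
  -- (vi) `α^g ∘ α^h = α^{gh}` on `α^{h⁻¹}(I^h ∩ I^{g⁻¹})`
  (∀ g h : G, 𝒢.comp g h → ∀ (y x : Ob) (f : C.Hom y x), f ∈ a.I (𝒢.inv h) y x →
      a.act h f ∈ a.I (𝒢.inv g) (a.act₀ h y) (a.act₀ h x) →
      HEq (a.act g (a.act h f)) (a.act (𝒢.mul g h) f))

/-- A partial action of a groupoid on an `R`-semicategory is global when
`α^g ∘ α^h = α^{gh}` and `α₀^g ∘ α₀^h = α₀^{gh}` for every composable pair. -/
def SemicatActionIsGlobal (𝒢 : AlgGroupoid G) (C : RSemicat.{u, v, w} R Ob)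
    (a : SemicatActionData R G C) : Prop :=
  𝒢.SetActionIsGlobal a.D₀ a.act₀ ∧
  ∀ g h : G, 𝒢.comp g h → ∀ (y x : Ob) (f : C.Hom y x),
    (f ∈ a.I (𝒢.inv (𝒢.mul g h)) y x ↔
      f ∈ a.I (𝒢.inv h) y x ∧ a.act h f ∈ a.I (𝒢.inv g) (a.act₀ h y) (a.act₀ h x)) ∧
    (f ∈ a.I (𝒢.inv (𝒢.mul g h)) y x → HEq (a.act g (a.act h f)) (a.act (𝒢.mul g h) f))
section Skew

variable (𝒢 : AlgGroupoid G)

/-- The product of homogeneous components in the (possibly non-associative)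
partial skew groupoid semicategory `C ∗_α 𝒢`:
for `f ∈ _zI^t_{ty}` and `l ∈ _yI^g_{gx}` the product is
`α^t(α^{t⁻¹}(f) ∘ l) ∈ _zI^{tg}_{(tg)x}` when `(t, g)` is composable and
`x ∈ C₀^{(tg)⁻¹}`, and `0` otherwise. -/
def skewMul (C : RSemicat.{u, v, w} R Ob) (a : SemicatActionData R G C) (t g : G)
    {z y x : Ob} (f : C.Hom z (a.act₀ t y)) (l : C.Hom y (a.act₀ g x)) :
    C.Hom z (a.act₀ (𝒢.mul t g) x) :=
  if h : 𝒢.comp t g ∧ x ∈ a.D₀ (𝒢.inv (𝒢.mul t g)) ∧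
      a.act₀ (𝒢.inv t) (a.act₀ t y) = y ∧ a.act₀ t (a.act₀ (𝒢.inv t) z) = z ∧
      a.act₀ t (a.act₀ g x) = a.act₀ (𝒢.mul t g) x then
    cast (by rw [h.2.2.2.1, h.2.2.2.2])
      (a.act t (C.comp (cast (by rw [h.2.2.1]) (a.act (𝒢.inv t) f)) l))
  else 0

/-- Associativity of the partial skew groupoid semicategory `C ∗_α 𝒢`:
`(f l) k = f (l k)` on homogeneous components. -/
def SkewAssoc (C : RSemicat.{u, v, w} R Ob) (a : SemicatActionData R G C) : Prop :=
  ∀ (t g h : G) (z y x u : Ob),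
    y ∈ a.D₀ (𝒢.inv t) → x ∈ a.D₀ (𝒢.inv g) → u ∈ a.D₀ (𝒢.inv h) →
    ∀ (f : C.Hom z (a.act₀ t y)) (l : C.Hom y (a.act₀ g x)) (k : C.Hom x (a.act₀ h u)),
      f ∈ a.I t z (a.act₀ t y) → l ∈ a.I g y (a.act₀ g x) → k ∈ a.I h x (a.act₀ h u) →
      HEq (skewMul 𝒢 C a (𝒢.mul t g) h (skewMul 𝒢 C a t g f l) k)
          (skewMul 𝒢 C a t (𝒢.mul g h) f (skewMul 𝒢 C a g h l k))

end Skew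

section Algebra

/-- The underlying module of the `R`-algebra `a(C) = ⊕_{x,y ∈ C₀} _yC_x`. -/
abbrev aHom (C : RSemicat.{u, v, w} R Ob) : Type (max v w) :=
  Π₀ p : Ob × Ob, C.Hom p.1 p.2

/-- The multiplication of the `R`-algebra `a(C)`: the matrix product
induced by the composition of `C`. -/
def aMul (C : RSemicat.{u, v, w} R Ob) (F K : aHom C) : aHom C :=
  DFinsupp.sum F fun p v => DFinsupp.sum K fun q w =>
    if h : p.2 = q.1 then
      DFinsupp.single (⟨p.1, q.2⟩ : Ob × Ob) (C.comp v (cast (by rw [h]) w : C.Hom p.2 q.2))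
    else 0

/-- `a(C)_g = ⊕_{x,y} _yI^g_x` as a subset of `a(C)`. -/
def aIdealSet (C : RSemicat.{u, v, w} R Ob) (a : SemicatActionData R G C) (g : G) :
    Set (aHom C) :=
  {F | ∀ p : Ob × Ob, F p ∈ a.I g p.1 p.2}

/-- The map `a(C)_{g⁻¹} → a(C)_g` induced componentwise by `α^g`. -/
def aAct {C : RSemicat.{u, v, w} R Ob} (a : SemicatActionData R G C) (g : G)
    (F : aHom C) : aHom C :=
  DFinsupp.sum F fun p v =>
    DFinsupp.single (⟨a.act₀ g p.1, a.act₀ g p.2⟩ : Ob × Ob) (a.act g v)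

/-- A multiplier `(Rm, Lm)` of the (possibly non-unital) "ring" given by a
multiplication `mul` on the subset `A` of an additive group `M`. -/
def IsMultiplierOn {M : Type*} [AddCommGroup M] (mul : M → M → M) (A : Set M)
    (Rm Lm : M → M) : Prop :=
  (∀ a ∈ A, Rm a ∈ A) ∧ (∀ a ∈ A, Lm a ∈ A) ∧
  (∀ a ∈ A, ∀ b ∈ A, Rm (a + b) = Rm a + Rm b) ∧
  (∀ a ∈ A, ∀ b ∈ A, Lm (a + b) = Lm a + Lm b) ∧
  (∀ a ∈ A, ∀ b ∈ A, Rm (mul a b) = mul a (Rm b)) ∧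
  (∀ a ∈ A, ∀ b ∈ A, Lm (mul a b) = mul (Lm a) b) ∧
  (∀ a ∈ A, ∀ b ∈ A, mul (Rm a) b = mul a (Lm b))

/-- `(L, R)`-associativity: for any two multipliers `(Rm, Lm)` and
`(Rm', Lm')` one has `Rm ∘ Lm' = Lm' ∘ Rm`. -/
def IsLRAssocOn {M : Type*} [AddCommGroup M] (mul : M → M → M) (A : Set M) : Prop :=
  ∀ Rm Lm Rm' Lm', IsMultiplierOn mul A Rm Lm → IsMultiplierOn mul A Rm' Lm' →
    ∀ a ∈ A, Rm (Lm' a) = Lm' (Rm a)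

/-- `J` is a two-sided ideal of the "ring" `I ⊆ M` (with multiplication `mul`). -/
def IsRingIdealPair {M : Type*} [AddCommGroup M] (mul : M → M → M) (J I : Set M) : Prop :=
  J ⊆ I ∧ (0 : M) ∈ J ∧ (∀ a ∈ J, ∀ b ∈ J, a + b ∈ J) ∧ (∀ a ∈ J, -a ∈ J) ∧
  (∀ a ∈ I, ∀ b ∈ J, mul a b ∈ J ∧ mul b a ∈ J)

/-- A partial action of a groupoid `𝒢` on the (possibly non-unital) ring
`(M, mul)`: ideals `D (r g) ⊴ M`, `D g ⊴ D (r g)` and ring isomorphisms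
`act g : D g⁻¹ → D g` satisfying the partial action axioms. -/
def IsRingPartialAction {M : Type*} [AddCommGroup M] (𝒢 : AlgGroupoid G)
    (mul : M → M → M) (D : G → Set M) (act : G → M → M) : Prop :=
  (∀ g, IsRingIdealPair mul (D (𝒢.r g)) Set.univ) ∧
  (∀ g, IsRingIdealPair mul (D g) (D (𝒢.r g))) ∧
  (∀ g, ∀ x ∈ D (𝒢.inv g), act g x ∈ D g) ∧
  (∀ g, ∀ x ∈ D (𝒢.inv g), act (𝒢.inv g) (act g x) = x) ∧
  (∀ g, ∀ y ∈ D g, ∃ x ∈ D (𝒢.inv g), act g x = y) ∧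
  (∀ g, ∀ x ∈ D (𝒢.inv g), ∀ y ∈ D (𝒢.inv g), act g (x + y) = act g x + act g y) ∧
  (∀ g, ∀ x ∈ D (𝒢.inv g), ∀ y ∈ D (𝒢.inv g), act g (mul x y) = mul (act g x) (act g y)) ∧
  (∀ e ∈ 𝒢.units, ∀ x ∈ D e, act e x = x) ∧
  (∀ g h, 𝒢.comp g h → ∀ x, x ∈ D (𝒢.inv g) → x ∈ D h →
      act (𝒢.inv h) x ∈ D (𝒢.inv (𝒢.mul g h))) ∧
  (∀ g h, 𝒢.comp g h → ∀ x ∈ D (𝒢.inv h), act h x ∈ D (𝒢.inv g) →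
      act g (act h x) = act (𝒢.mul g h) x)

/-- A partial ring action is global when `α_g ∘ α_h = α_{gh}` for every
composable pair. -/
def RingActionIsGlobal {M : Type*} (𝒢 : AlgGroupoid G)
    (D : G → Set M) (act : G → M → M) : Prop :=
  ∀ g h, 𝒢.comp g h →
    (∀ x, x ∈ D (𝒢.inv (𝒢.mul g h)) ↔ x ∈ D (𝒢.inv h) ∧ act h x ∈ D (𝒢.inv g)) ∧
    (∀ x ∈ D (𝒢.inv (𝒢.mul g h)), act g (act h x) = act (𝒢.mul g h) x)

end Algebra
section Globalization

variable {Ob' : Type v'}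

/-- Membership in the image ideal `φ(I)` (inside the semicategory `D`),
with the convention that its components vanish away from the image of `ι`. -/
def ImageMem (C : RSemicat.{u, v, w} R Ob) (D : RSemicat.{u, v', w'} R Ob') (ι : Ob → Ob')
    (I : ∀ y x : Ob, Submodule R (C.Hom y x))
    (φ : ∀ {y x : Ob}, C.Hom y x → D.Hom (ι y) (ι x))
    {z x' : Ob'} (k : D.Hom z x') : Prop :=
  k = 0 ∨ ∃ (y x : Ob) (f : C.Hom y x), f ∈ I y x ∧ ι y = z ∧ ι x = x' ∧ HEq (φ f) k

/-- The data of a (candidate) globalization of a partial action on `C`: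
a global action on the semicategory `D`, an inclusion `ι : C₀ → D₀` of object
sets, and semifunctors `φ_e : I^e → J^e` acting as `ι` on objects. -/
structure GlobalizationData (R : Type u) [CommRing R] (G : Type u₂) {Ob : Type v}
    {Ob' : Type v'} (C : RSemicat.{u, v, w} R Ob) (D : RSemicat.{u, v', w'} R Ob') where
  b : SemicatActionData R G D
  ι : Ob → Ob'
  φ : ∀ (e : G) {y x : Ob}, C.Hom y x → D.Hom (ι y) (ι x)

/-- `(D, β, (φ_e))` is a globalization of the partial groupoid action
`(C, α)` (Definition 3.2 of the paper). -/
def IsGlobalization (𝒢 : AlgGroupoid G) (C : RSemicat.{u, v, w} R Ob)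
    (a : SemicatActionData R G C) (D : RSemicat.{u, v', w'} R Ob')
    (gd : GlobalizationData R G C D) : Prop :=
  Function.Injective gd.ι ∧
  -- β is a global action of 𝒢 on D
  IsSemicatPartialAction 𝒢 D gd.b ∧
  SemicatActionIsGlobal 𝒢 D gd.b ∧
  -- (i) the object-level action β₀ is a globalization of α₀
  (∀ e ∈ 𝒢.units, ∀ x : Ob, x ∈ a.D₀ e ↔ gd.ι x ∈ gd.b.D₀ e) ∧
  (∀ g : G, ∀ x : Ob, x ∈ a.D₀ g ↔
      (gd.ι x ∈ gd.b.D₀ (𝒢.r g) ∧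
        ∃ x' : Ob, gd.ι x' ∈ gd.b.D₀ (𝒢.d g) ∧ gd.b.act₀ g (gd.ι x') = gd.ι x)) ∧
  (∀ g : G, ∀ x ∈ a.D₀ (𝒢.inv g), gd.ι (a.act₀ g x) = gd.b.act₀ g (gd.ι x)) ∧
  -- (ii) each φ_e is a faithful semifunctor with φ_e(I^e) ⊴ J^e
  (∀ e ∈ 𝒢.units,
    (∀ (y x : Ob) (f f' : C.Hom y x), f ∈ a.I e y x → f' ∈ a.I e y x →
        gd.φ e (f + f') = gd.φ e f + gd.φ e f') ∧
    (∀ (y x : Ob) (c : R) (f : C.Hom y x), f ∈ a.I e y x →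
        gd.φ e (c • f) = c • gd.φ e f) ∧
    (∀ (z y x : Ob) (f : C.Hom z y) (f' : C.Hom y x), f ∈ a.I e z y → f' ∈ a.I e y x →
        gd.φ e (C.comp f f') = D.comp (gd.φ e f) (gd.φ e f')) ∧
    (∀ (y x : Ob) (f f' : C.Hom y x), f ∈ a.I e y x → f' ∈ a.I e y x →
        gd.φ e f = gd.φ e f' → f = f') ∧
    (∀ (y x : Ob) (f : C.Hom y x), f ∈ a.I e y x →
        gd.φ e f ∈ gd.b.I e (gd.ι y) (gd.ι x))) ∧
  (∀ e ∈ 𝒢.units, ∀ (w z x' : Ob') (u : D.Hom w z) (k : D.Hom z x'),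
      u ∈ gd.b.I e w z → ImageMem C D gd.ι (a.I e) (gd.φ e) k →
      ImageMem C D gd.ι (a.I e) (gd.φ e) (D.comp u k)) ∧
  (∀ e ∈ 𝒢.units, ∀ (z x' w : Ob') (k : D.Hom z x') (u : D.Hom x' w),
      ImageMem C D gd.ι (a.I e) (gd.φ e) k → u ∈ gd.b.I e x' w →
      ImageMem C D gd.ι (a.I e) (gd.φ e) (D.comp k u)) ∧
  -- (iii) φ_{r g}(_yI^g_x) = φ_{r g}(_yI^{r g}_x) ∩ β^g(φ_{d g}(_{g⁻¹y}I^{d g}_{g⁻¹x}))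
  (∀ g : G, ∀ y ∈ a.D₀ g, ∀ x ∈ a.D₀ g, ∀ k : D.Hom (gd.ι y) (gd.ι x),
      (∃ f ∈ a.I g y x, gd.φ (𝒢.r g) f = k) ↔
        ((∃ f ∈ a.I (𝒢.r g) y x, gd.φ (𝒢.r g) f = k) ∧
          ∃ f' : C.Hom (a.act₀ (𝒢.inv g) y) (a.act₀ (𝒢.inv g) x),
            f' ∈ a.I (𝒢.d g) (a.act₀ (𝒢.inv g) y) (a.act₀ (𝒢.inv g) x) ∧
            HEq (gd.b.act g (gd.φ (𝒢.d g) f')) k)) ∧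
  -- (iv) β^g ∘ φ_{d g} = φ_{r g} ∘ α^g on I^{g⁻¹}
  (∀ (g : G) (y x : Ob) (f : C.Hom y x), f ∈ a.I (𝒢.inv g) y x →
      HEq (gd.b.act g (gd.φ (𝒢.d g) f)) (gd.φ (𝒢.r g) (a.act g f))) ∧
  -- (v) _yJ^g_x = Σ_{r h = r g} β^h(φ_{d h}(_{h⁻¹y}I^{d h}_{h⁻¹x}))
  (∀ (g : G) (y x : Ob'), gd.b.I g y x = Submodule.span R
      {m : D.Hom y x | ∃ h : G, 𝒢.r h = 𝒢.r g ∧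
        ∃ (y' x' : Ob) (f : C.Hom y' x'), f ∈ a.I (𝒢.d h) y' x' ∧
          gd.ι y' = gd.b.act₀ (𝒢.inv h) y ∧ gd.ι x' = gd.b.act₀ (𝒢.inv h) x ∧
          HEq (gd.b.act h (gd.φ (𝒢.d h) f)) m})

/-- The ring homomorphism `ψ_e : a(C) → a(D)` induced componentwise by a
semifunctor `φ_e`. -/
def aPhiRing {C : RSemicat.{u, v, w} R Ob} {D : RSemicat.{u, v', w'} R Ob'}
    (ι : Ob → Ob') (φ : ∀ (e : G) {y x : Ob}, C.Hom y x → D.Hom (ι y) (ι x))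
    (e : G) (F : aHom C) : aHom D :=
  DFinsupp.sum F fun p v => DFinsupp.single (⟨ι p.1, ι p.2⟩ : Ob' × Ob') (φ e v)

/-- A global action `(DN, actN)` of `𝒢` on the ring `(N, mulN)` is a
globalization of the partial ring action `(DM, actM)` of `𝒢` on `(M, mulM)`
via the ring monomorphisms `ψ_e` (Definition 3.1 of the paper). -/
def IsRingGlobalization {M N : Type*} [AddCommGroup M] [AddCommGroup N]
    (𝒢 : AlgGroupoid G)
    (mulM : M → M → M) (DM : G → Set M) (actM : G → M → M)
    (mulN : N → N → N) (DN : G → Set N) (actN : G → N → N)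
    (ψ : G → M → N) : Prop :=
  IsRingPartialAction 𝒢 mulN DN actN ∧
  RingActionIsGlobal 𝒢 DN actN ∧
  (∀ e ∈ 𝒢.units,
    (∀ x ∈ DM e, ψ e x ∈ DN e) ∧
    (∀ x ∈ DM e, ∀ y ∈ DM e, ψ e (x + y) = ψ e x + ψ e y) ∧
    (∀ x ∈ DM e, ∀ y ∈ DM e, ψ e (mulM x y) = mulN (ψ e x) (ψ e y)) ∧
    (∀ x ∈ DM e, ∀ y ∈ DM e, ψ e x = ψ e y → x = y) ∧
    -- (i) ψ_e(A_e) is an ideal of B_e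
    IsRingIdealPair mulN (ψ e '' DM e) (DN e)) ∧
  -- (ii)
  (∀ g : G, ψ (𝒢.r g) '' DM g =
      (ψ (𝒢.r g) '' DM (𝒢.r g)) ∩ (actN g '' (ψ (𝒢.d g) '' DM (𝒢.d g)))) ∧
  -- (iii)
  (∀ g : G, ∀ x ∈ DM (𝒢.inv g), actN g (ψ (𝒢.d g) x) = ψ (𝒢.r g) (actM g x)) ∧
  -- (iv)
  (∀ g : G, ∀ k : N, k ∈ DN g ↔ k ∈ AddSubgroup.closure
      {m : N | ∃ h : G, 𝒢.r h = 𝒢.r g ∧ ∃ F ∈ DM (𝒢.d h), m = actN h (ψ (𝒢.d h) F)})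

end Globalization

section Orbits

/-- The orbit relation induced by a partial action of a groupoid: `e ∼ f`
iff `f = g e` for some morphism `g` with `e` in the domain of `α_g`. -/
def orbRel {Y : Type*} (𝒢 : AlgGroupoid G) (D : G → Set Y) (act : G → Y → Y)
    (e f : Y) : Prop :=
  ∃ g : G, e ∈ D (𝒢.inv g) ∧ act g e = f

/-- `C(ρ,τ)_g = ⊕_{x ∈ ρ, y ∈ τ} _yI^g_x`, realized inside `a(C)`. -/
def CSet (C : RSemicat.{u, v, w} R Ob) (a : SemicatActionData R G C)
    (ρ τ : Set Ob) (g : G) : Set (aHom C) :=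
  {F | ∀ p : Ob × Ob, F p ∈ a.I g p.1 p.2 ∧ (F p ≠ 0 → p.1 ∈ τ ∧ p.2 ∈ ρ)}

end Orbits
section SkewCatAlgebra

/-- The morphism module `_y(C∗_α𝒢)_x = ⊕_{g} _yI^g_{gx}` of the partial skew
groupoid semicategory (realized as a direct sum over all of `G`; the genuine
morphisms are those supported on `𝒢^x` with components in `I^g`). -/
abbrev SkewHomT (C : RSemicat.{u, v, w} R Ob) (a : SemicatActionData R G C)
    (y x : Ob) : Type (max u₂ w) :=
  Π₀ g : G, C.Hom y (a.act₀ g x)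

/-- Composition in the partial skew groupoid semicategory `C∗_α𝒢`. -/
def skewHomMul (𝒢 : AlgGroupoid G) (C : RSemicat.{u, v, w} R Ob)
    (a : SemicatActionData R G C) {z y x : Ob}
    (F : SkewHomT C a z y) (K : SkewHomT C a y x) : SkewHomT C a z x :=
  DFinsupp.sum F fun t f => DFinsupp.sum K fun g l =>
    DFinsupp.single (𝒢.mul t g) (skewMul 𝒢 C a t g f l)

/-- The underlying module of the algebra `a(C∗_α𝒢)`. -/
abbrev aSkewT (C : RSemicat.{u, v, w} R Ob) (a : SemicatActionData R G C) :
    Type (max v u₂ w) :=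
  Π₀ p : Ob × Ob, SkewHomT C a p.1 p.2

/-- The multiplication of the algebra `a(C∗_α𝒢)`. -/
def aSkewMul (𝒢 : AlgGroupoid G) (C : RSemicat.{u, v, w} R Ob)
    (a : SemicatActionData R G C) (F K : aSkewT C a) : aSkewT C a :=
  DFinsupp.sum F fun p u => DFinsupp.sum K fun q v =>
    if h : p.2 = q.1 then
      DFinsupp.single (⟨p.1, q.2⟩ : Ob × Ob)
        (skewHomMul 𝒢 C a u (cast (by rw [h]) v : SkewHomT C a p.2 q.2))
    else 0

/-- The set of genuine elements of `a(C∗_α𝒢)` inside `aSkewT`. -/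
def aSkewSet (𝒢 : AlgGroupoid G) (C : RSemicat.{u, v, w} R Ob)
    (a : SemicatActionData R G C) : Set (aSkewT C a) :=
  {F | ∀ (p : Ob × Ob) (g : G), F p g ∈ a.I g p.1 (a.act₀ g p.2) ∧
    (p.2 ∉ a.D₀ (𝒢.inv g) → F p g = 0)}

/-- The underlying module of the partial skew groupoid ring
`a(C)∗_α𝒢 = ⊕_g a(C)_g δ_g`. -/
abbrev sRingT (G : Type u₂) (C : RSemicat.{u, v, w} R Ob) : Type (max v u₂ w) :=
  Π₀ _g : G, aHom C

/-- The multiplication of the partial skew groupoid ring `a(C)∗_α𝒢`: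
`(a_g δ_g)(b_h δ_h) = α_g(α_{g⁻¹}(a_g) b_h) δ_{gh}` when `(g,h)` is
composable, and `0` otherwise. -/
def sRingMul (𝒢 : AlgGroupoid G) (C : RSemicat.{u, v, w} R Ob)
    (a : SemicatActionData R G C) (F K : sRingT G C) : sRingT G C :=
  DFinsupp.sum F fun g ag => DFinsupp.sum K fun h bh =>
    if 𝒢.comp g h then
      DFinsupp.single (𝒢.mul g h) (aAct a g (aMul C (aAct a (𝒢.inv g) ag) bh))
    else 0

/-- The set of genuine elements of `a(C)∗_α𝒢` inside `sRingT`. -/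
def sRingSet (C : RSemicat.{u, v, w} R Ob) (a : SemicatActionData R G C) :
    Set (sRingT G C) :=
  {K | ∀ (g : G) (p : Ob × Ob), K g p ∈ a.I g p.1 p.2}

/-- The isomorphism `a(C∗_α𝒢) → a(C)∗_α𝒢`, `f_g ↦ f_g δ_g`. -/
def aPhi (C : RSemicat.{u, v, w} R Ob) (a : SemicatActionData R G C)
    (F : aSkewT C a) : sRingT G C :=
  DFinsupp.sum F fun p u => DFinsupp.sum u fun g f =>
    DFinsupp.single g (DFinsupp.single (⟨p.1, a.act₀ g p.2⟩ : Ob × Ob) f)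

end SkewCatAlgebra

section Graded

/-- A `𝒢`-grading of an `R`-semicategory `B`: decompositions
`_yB_x = ⊕_{g} _yB_x^g` such that `_zB_y^t ⬝ _yB_x^s ⊆ _zB_x^{ts}` when
`d t = r s` and `_zB_y^t ⬝ _yB_x^s = 0` otherwise. -/
def IsGrading (𝒢 : AlgGroupoid G) (B : RSemicat.{u, v, w} R Ob)
    (deco : ∀ y x : Ob, G → Submodule R (B.Hom y x)) : Prop :=
  (∀ y x : Ob, DirectSum.IsInternal fun g : G => deco y x g) ∧
  (∀ (z y x : Ob) (t s : G), 𝒢.comp t s → ∀ u ∈ deco z y t, ∀ v ∈ deco y x s,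
      B.comp u v ∈ deco z x (𝒢.mul t s)) ∧
  (∀ (z y x : Ob) (t s : G), ¬ 𝒢.comp t s → ∀ u ∈ deco z y t, ∀ v ∈ deco y x s,
      B.comp u v = 0)

/-- The morphism submodule `_{(y,t)}(B#𝒢)_{(x,s)}` of the smash product:
`_yB_x^{t⁻¹ s}` when `r t = r s`, and `0` otherwise. -/
def smashMod (𝒢 : AlgGroupoid G) (B : RSemicat.{u, v, w} R Ob)
    (deco : ∀ y x : Ob, G → Submodule R (B.Hom y x))
    (yt xs : Ob × G) : Submodule R (B.Hom yt.1 xs.1) :=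
  if 𝒢.r yt.2 = 𝒢.r xs.2 then deco yt.1 xs.1 (𝒢.mul (𝒢.inv yt.2) xs.2) else ⊥

/-- The smash product `R`-semicategory `B#𝒢`. -/
def Smash (𝒢 : AlgGroupoid G) (B : RSemicat.{u, v, w} R Ob)
    (deco : ∀ y x : Ob, G → Submodule R (B.Hom y x))
    (hgr : IsGrading 𝒢 B deco) :
    RSemicat.{u, max v u₂, w} R (Ob × G) where
  Hom yt xs := ↥(smashMod 𝒢 B deco yt xs)
  comp {z y x} f g := ⟨B.comp f.1 g.1, by
    obtain ⟨fv, hf⟩ := f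
    obtain ⟨gv, hg⟩ := g
    show B.comp fv gv ∈ smashMod 𝒢 B deco z x
    unfold smashMod at hf hg ⊢
    by_cases h1 : 𝒢.r z.2 = 𝒢.r y.2
    · by_cases h2 : 𝒢.r y.2 = 𝒢.r x.2
      · rw [if_pos h1] at hf
        rw [if_pos h2] at hg
        rw [if_pos (h1.trans h2)]
        have c1 : 𝒢.comp (𝒢.inv z.2) y.2 :=
          (𝒢.comp_iff _ _).2 (by rw [𝒢.inv_inv']; exact h1)
        have c2 : 𝒢.comp (𝒢.inv y.2) x.2 :=
          (𝒢.comp_iff _ _).2 (by rw [𝒢.inv_inv']; exact h2)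
        have ccy : 𝒢.comp y.2 (𝒢.inv y.2) := 𝒢.comp_inv_right y.2
        have ccyc : 𝒢.comp y.2 (𝒢.mul (𝒢.inv y.2) x.2) :=
          𝒢.comp_mul_right y.2 (𝒢.inv y.2) x.2 ccy c2
        have hcomp : 𝒢.comp (𝒢.mul (𝒢.inv z.2) y.2) (𝒢.mul (𝒢.inv y.2) x.2) :=
          𝒢.comp_mul_left (𝒢.inv z.2) y.2 (𝒢.mul (𝒢.inv y.2) x.2) c1 ccyc
        have hmem := hgr.2.1 z.1 y.1 x.1 (𝒢.mul (𝒢.inv z.2) y.2)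
          (𝒢.mul (𝒢.inv y.2) x.2) hcomp fv hf gv hg
        have h2' : 𝒢.mul y.2 (𝒢.inv y.2) = 𝒢.mul x.2 (𝒢.inv x.2) := h2
        have s5 : 𝒢.mul x.2 (𝒢.mul (𝒢.inv x.2) x.2) = x.2 := by
          have h5 := 𝒢.inv_mul_cancel' (𝒢.inv x.2) x.2 (𝒢.comp_inv_left x.2)
          rwa [𝒢.inv_inv'] at h5
        have hidx : 𝒢.mul (𝒢.mul (𝒢.inv z.2) y.2) (𝒢.mul (𝒢.inv y.2) x.2) =
            𝒢.mul (𝒢.inv z.2) x.2 := by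
          rw [𝒢.mul_assoc' (𝒢.inv z.2) y.2 (𝒢.mul (𝒢.inv y.2) x.2) c1 ccyc,
            ← 𝒢.mul_assoc' y.2 (𝒢.inv y.2) x.2 ccy c2, h2',
            𝒢.mul_assoc' x.2 (𝒢.inv x.2) x.2 (𝒢.comp_inv_right x.2) (𝒢.comp_inv_left x.2),
            s5]
        rw [hidx] at hmem
        exact hmem
      · rw [if_neg h2] at hg
        have hg0 : gv = 0 := by simpa using hg
        rw [hg0, B.comp_zero_right]
        exact Submodule.zero_mem _
    · rw [if_neg h1] at hf
      have hf0 : fv = 0 := by simpa using hf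
      rw [hf0, B.comp_zero_left]
      exact Submodule.zero_mem _⟩
  comp_assoc f g h := Subtype.ext (B.comp_assoc f.1 g.1 h.1)
  comp_add_left f f' g := Subtype.ext (B.comp_add_left f.1 f'.1 g.1)
  comp_add_right f g g' := Subtype.ext (B.comp_add_right f.1 g.1 g'.1)
  comp_smul_left c f g := Subtype.ext (B.comp_smul_left c f.1 g.1)
  comp_smul_right c f g := Subtype.ext (B.comp_smul_right c f.1 g.1)

/-- The object part of the global action of `𝒢` on `B#𝒢`:
`α₀^g (x, s) = (x, g s)`. -/
def smashAct₀ (𝒢 : AlgGroupoid G) (g : G) (p : Ob × G) : Ob × G :=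
  (p.1, 𝒢.mul g p.2)

/-- The global action of `𝒢` on the smash product `B#𝒢` (domains
`B₀ × 𝒢(-, r g)`, `α₀^g(x,s) = (x, gs)`, ideals `_{(y,t)}I^g_{(x,s)}`
given by `_yB_x^{t⁻¹s}` when `r t = r s = r g` and `0` otherwise, and `α^g`
given by the identity on the underlying morphisms of `B`). -/
def smashActionData (𝒢 : AlgGroupoid G) (B : RSemicat.{u, v, w} R Ob)
    (deco : ∀ y x : Ob, G → Submodule R (B.Hom y x))
    (hgr : IsGrading 𝒢 B deco) :
    SemicatActionData R G (Smash 𝒢 B deco hgr) where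
  D₀ g := {p : Ob × G | 𝒢.r p.2 = 𝒢.r g}
  act₀ := smashAct₀ 𝒢
  I g yt xs := if 𝒢.r yt.2 = 𝒢.r g ∧ 𝒢.r xs.2 = 𝒢.r g then ⊤ else ⊥
  act g {yt xs} f :=
    if h : (f.1 : B.Hom yt.1 xs.1) ∈
        smashMod 𝒢 B deco (smashAct₀ 𝒢 g yt) (smashAct₀ 𝒢 g xs) then
      ⟨f.1, h⟩
    else 0

end Graded

namespace AlgGroupoid

variable {G : Type u₂} (𝒢 : AlgGroupoid G)

theorem r_inv' (g : G) : 𝒢.r (𝒢.inv g) = 𝒢.d g := by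
  unfold r d
  rw [𝒢.inv_inv']

theorem d_eq_r_of_comp' {g h : G} (hc : 𝒢.comp g h) : 𝒢.d g = 𝒢.r h :=
  (𝒢.comp_iff g h).1 hc

theorem d_mul' {g h : G} (hc : 𝒢.comp g h) : 𝒢.d (𝒢.mul g h) = 𝒢.d h := by
  have h1 : 𝒢.comp (𝒢.mul g h) (𝒢.inv h) :=
    𝒢.comp_mul_left g h (𝒢.inv h) hc (𝒢.comp_inv_right h)
  have h2 := (𝒢.comp_iff (𝒢.mul g h) (𝒢.inv h)).1 h1
  rw [𝒢.inv_inv'] at h2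
  exact h2

theorem inv_rmul (g : G) : 𝒢.inv (𝒢.mul g (𝒢.inv g)) = 𝒢.mul g (𝒢.inv g) := by
  have h := 𝒢.inv_mul' g (𝒢.inv g) (𝒢.comp_inv_right g)
  rw [𝒢.inv_inv'] at h
  exact h

end AlgGroupoid

/-- A partial action `α = (I^g, α^g)` of a groupoid `𝒢` on an
`R`-semicategory `C` is global if and only if `I^g = I^{r g}` and
`C₀^g = C₀^{r g}` for every morphism `g` of `𝒢`. -/
theorem stmt2 {R : Type u} [CommRing R] {G : Type u₂} {Ob : Type v}
    (𝒢 : AlgGroupoid G) (C : RSemicat.{u, v, w} R Ob) (a : SemicatActionData R G C)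
    (hpa : IsSemicatPartialAction 𝒢 C a) :
    SemicatActionIsGlobal 𝒢 C a ↔
      ∀ g : G, a.I g = a.I (𝒢.r g) ∧ a.D₀ g = a.D₀ (𝒢.r g) := by
  obtain ⟨hset, hzero, hII, hId, hactmem, hadd, hsmul, hinjm, hsurj, hcm, hidact, hv, hvi⟩ := hpa
  obtain ⟨hsub, hDr, hcov, hide, hmaps, hinvact, himg, hcompat⟩ := hset
  constructor
  · rintro ⟨hg0, hgI⟩ g
    have hcgi : 𝒢.comp g (𝒢.inv g) := 𝒢.comp_inv_right g
    have hinvr := 𝒢.inv_rmul g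
    constructor
    · -- I g = I (r g)
      funext y x
      ext f
      have hiff := (hgI g (𝒢.inv g) hcgi y x f).1
      rw [hinvr, 𝒢.inv_inv'] at hiff
      show f ∈ a.I g y x ↔ f ∈ a.I (𝒢.mul g (𝒢.inv g)) y x
      constructor
      · intro hf
        have hmem : f ∈ a.I (𝒢.inv (𝒢.inv g)) y x := by rwa [𝒢.inv_inv']
        exact hiff.2 ⟨hf, hactmem (𝒢.inv g) y x f hmem⟩
      · intro hf
        exact (hiff.1 hf).1
    · -- D₀ g = D₀ (r g)
      have hD := (hg0 g (𝒢.inv g) hcgi).1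
      rw [hinvr, 𝒢.inv_inv'] at hD
      show a.D₀ g = a.D₀ (𝒢.mul g (𝒢.inv g))
      rw [hD]
      ext x
      constructor
      · intro hx
        refine ⟨hx, ?_⟩
        have himg' := himg g (𝒢.inv g) hcgi
        have hxin : x ∈ a.D₀ g ∩ a.D₀ (𝒢.mul g (𝒢.inv g)) := ⟨hx, hDr g hx⟩
        rw [← himg'] at hxin
        obtain ⟨x', hx', hxx'⟩ := hxin
        have hinv := hinvact g x' hx'.1
        rw [hxx'] at hinv
        rw [hinv]
        exact hx'.1
      · intro hx
        exact hx.1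
  · intro H
    have key : ∀ {g h : G}, 𝒢.comp g h →
        a.D₀ (𝒢.inv (𝒢.mul g h)) = a.D₀ (𝒢.inv h) ∧
        a.I (𝒢.inv (𝒢.mul g h)) = a.I (𝒢.inv h) ∧
        a.D₀ h = a.D₀ (𝒢.inv g) ∧ a.I h = a.I (𝒢.inv g) := by
      intro g h hc
      have e1 : 𝒢.r (𝒢.inv (𝒢.mul g h)) = 𝒢.r (𝒢.inv h) := by
        rw [𝒢.r_inv', 𝒢.r_inv', 𝒢.d_mul' hc]
      have e2 : 𝒢.r h = 𝒢.r (𝒢.inv g) := by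
        rw [𝒢.r_inv']
        exact (𝒢.d_eq_r_of_comp' hc).symm
      refine ⟨?_, ?_, ?_, ?_⟩
      · rw [(H (𝒢.inv (𝒢.mul g h))).2, e1, ← (H (𝒢.inv h)).2]
      · rw [(H (𝒢.inv (𝒢.mul g h))).1, e1, ← (H (𝒢.inv h)).1]
      · rw [(H h).2, e2, ← (H (𝒢.inv g)).2]
      · rw [(H h).1, e2, ← (H (𝒢.inv g)).1]
    constructor
    · -- set-level globality
      intro g h hc
      obtain ⟨eD, _, eDh, _⟩ := key hc
      constructor
      · rw [eD]
        ext x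
        constructor
        · intro hx
          have h1 : a.act₀ h x ∈ a.D₀ h := hmaps h x hx
          rw [eDh] at h1
          exact ⟨hx, h1⟩
        · intro hx
          exact hx.1
      · intro x hx
        rw [eD] at hx
        have h1 : a.act₀ h x ∈ a.D₀ h := hmaps h x hx
        have h2 : a.act₀ h x ∈ a.D₀ (𝒢.inv g) := by rwa [← eDh]
        exact hcompat g h hc x hx ⟨h2, h1⟩
    · -- module-level globality
      intro g h hc y x f
      obtain ⟨_, eI, _, eIh⟩ := key hc
      have hmemI : ∀ f' : C.Hom y x, f' ∈ a.I (𝒢.inv h) y x →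
          a.act h f' ∈ a.I (𝒢.inv g) (a.act₀ h y) (a.act₀ h x) := by
        intro f' hf'
        have h1 := hactmem h y x f' hf'
        rwa [eIh] at h1
      constructor
      · rw [eI]
        exact ⟨fun hf => ⟨hf, hmemI f hf⟩, fun hf => hf.1⟩
      · intro hf
        rw [eI] at hf
        exact hvi g h hc y x f hf (hmemI f hf)
end
end

section
/- Let α = (I^g, α^g)_{g∈mor(𝒢)} be a partial action of a groupoid 𝒢 on an R-semicategory C. Then for every composable pair (g,h) ∈ 𝒢² and all appropriate objects x,y one has α^g(_yI^{g⁻¹}_x ∩ _yI^h_x) = _{gy}I^g_{gx} ∩ _{gy}I^{gh}_{gx}; that is, α^g maps the intersection I^{g⁻¹} ∩ I^h onto the intersection I^g ∩ I^{gh}. -/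
open scoped Classical

noncomputable section

universe u u₂ v v' w w'

variable {R : Type u} [CommRing R] {G : Type u₂} {Ob : Type v}

section Stmt4Aux

variable {R : Type u} [CommRing R] {G : Type u₂} {Ob : Type v}

theorem stmt4_mem_transfer (C : RSemicat.{u, v, w} R Ob)
    (I : ∀ y x : Ob, Submodule R (C.Hom y x)) {A B y x : Ob}
    (hA : A = y) (hB : B = x) {m : C.Hom A B} {f : C.Hom y x}
    (hq : HEq m f) (hm : m ∈ I A B) : f ∈ I y x := by
  subst hA; subst hB; exact (eq_of_heq hq) ▸ hm

theorem stmt4_comp_inv_inv (𝒢 : AlgGroupoid G) {g h : G} (hc : 𝒢.comp g h) :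
    𝒢.comp (𝒢.inv h) (𝒢.inv g) := by
  rw [𝒢.comp_iff, 𝒢.inv_inv', 𝒢.inv_inv']
  exact ((𝒢.comp_iff g h).1 hc).symm

theorem stmt4_inv_mul_inv (𝒢 : AlgGroupoid G) {g h : G} (hc : 𝒢.comp g h) :
    𝒢.inv (𝒢.mul (𝒢.inv h) (𝒢.inv g)) = 𝒢.mul g h := by
  rw [𝒢.inv_mul' _ _ (stmt4_comp_inv_inv 𝒢 hc), 𝒢.inv_inv', 𝒢.inv_inv']

theorem stmt4_r_mul (𝒢 : AlgGroupoid G) {g h : G} (hc : 𝒢.comp g h) :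
    𝒢.mul (𝒢.mul g h) (𝒢.inv (𝒢.mul g h)) = 𝒢.mul g (𝒢.inv g) := by
  have hcompinv := stmt4_comp_inv_inv 𝒢 hc
  have h1 : 𝒢.comp h (𝒢.mul (𝒢.inv h) (𝒢.inv g)) :=
    𝒢.comp_mul_right h (𝒢.inv h) (𝒢.inv g) (𝒢.comp_inv_right h) hcompinv
  have hd : 𝒢.mul h (𝒢.inv h) = 𝒢.mul (𝒢.inv g) g := ((𝒢.comp_iff g h).1 hc).symm
  rw [𝒢.inv_mul' g h hc,
    𝒢.mul_assoc' g h (𝒢.mul (𝒢.inv h) (𝒢.inv g)) hc h1,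
    ← 𝒢.mul_assoc' h (𝒢.inv h) (𝒢.inv g) (𝒢.comp_inv_right h) hcompinv, hd,
    𝒢.mul_assoc' (𝒢.inv g) g (𝒢.inv g) (𝒢.comp_inv_left g) (𝒢.comp_inv_right g),
    𝒢.inv_mul_cancel' g (𝒢.inv g) (𝒢.comp_inv_right g)]

theorem stmt4_comp_invmul_g (𝒢 : AlgGroupoid G) {g h : G} (hc : 𝒢.comp g h) :
    𝒢.comp (𝒢.inv (𝒢.mul g h)) g := by
  rw [𝒢.comp_iff, 𝒢.inv_inv']
  exact stmt4_r_mul 𝒢 hc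

theorem stmt4_inv_invmul_g (𝒢 : AlgGroupoid G) {g h : G} (hc : 𝒢.comp g h) :
    𝒢.inv (𝒢.mul (𝒢.inv (𝒢.mul g h)) g) = h := by
  have hcompinv := stmt4_comp_inv_inv 𝒢 hc
  have hd : 𝒢.mul (𝒢.inv g) g = 𝒢.mul h (𝒢.inv h) := (𝒢.comp_iff g h).1 hc
  have : 𝒢.mul (𝒢.inv (𝒢.mul g h)) g = 𝒢.inv h := by
    have hg : 𝒢.mul (𝒢.mul (𝒢.inv h) (𝒢.inv g)) g =
        𝒢.mul (𝒢.inv h) (𝒢.mul (𝒢.inv g) g) :=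
      𝒢.mul_assoc' (𝒢.inv h) (𝒢.inv g) g hcompinv (𝒢.comp_inv_left g)
    rw [𝒢.inv_mul' g h hc, hg, hd,
      𝒢.inv_mul_cancel' h (𝒢.inv h) (𝒢.comp_inv_right h)]
  rw [this, 𝒢.inv_inv']

end Stmt4Aux

/-- For a partial action `α = (I^g, α^g)` of a groupoid `𝒢` on
an `R`-semicategory `C` and every composable pair `(g, h)`,
`α^g(_yI^{g⁻¹}_x ⊓ _yI^h_x) = _{gy}I^g_{gx} ⊓ _{gy}I^{gh}_{gx}` for all
appropriate objects `x, y`. -/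
theorem stmt4 {R : Type u} [CommRing R] {G : Type u₂} {Ob : Type v}
    (𝒢 : AlgGroupoid G) (C : RSemicat.{u, v, w} R Ob) (a : SemicatActionData R G C)
    (hpa : IsSemicatPartialAction 𝒢 C a) :
    ∀ g h : G, 𝒢.comp g h →
      ∀ y x : Ob, y ∈ a.D₀ (𝒢.inv g) ∩ a.D₀ h → x ∈ a.D₀ (𝒢.inv g) ∩ a.D₀ h →
        (fun f : C.Hom y x => a.act g f) ''
            ((a.I (𝒢.inv g) y x ⊓ a.I h y x : Submodule R (C.Hom y x)) :
              Set (C.Hom y x)) =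
          ((a.I g (a.act₀ g y) (a.act₀ g x) ⊓
              a.I (𝒢.mul g h) (a.act₀ g y) (a.act₀ g x) :
                Submodule R (C.Hom (a.act₀ g y) (a.act₀ g x))) :
            Set (C.Hom (a.act₀ g y) (a.act₀ g x))) := by
  obtain ⟨hset, hvanish, hidealin, hideal, hmaps, hadd, hsmul, hinj, hsurj,
    hcompmul, hid, hv, hvi⟩ := hpa
  obtain ⟨hsub, hsubr, hcover, hacte, hactdom, hactinv, himg, hcompat⟩ := hset
  intro g h hc y x hy hx
  have hcompinv := stmt4_comp_inv_inv 𝒢 hc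
  have hy' : a.act₀ (𝒢.inv g) (a.act₀ g y) = y := hactinv g y hy.1
  have hx' : a.act₀ (𝒢.inv g) (a.act₀ g x) = x := hactinv g x hx.1
  ext k
  simp only [Set.mem_image, SetLike.mem_coe, Submodule.mem_inf]
  constructor
  · rintro ⟨f, ⟨hf1, hf2⟩, rfl⟩
    refine ⟨hmaps g y x f hf1, ?_⟩
    have hf2' : f ∈ a.I (𝒢.inv (𝒢.inv h)) y x := by rw [𝒢.inv_inv']; exact hf2
    have hres := hv (𝒢.inv h) (𝒢.inv g) hcompinv y x f hf1 hf2'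
    rw [𝒢.inv_inv'] at hres
    rw [stmt4_inv_mul_inv 𝒢 hc] at hres
    exact hres
  · rintro ⟨hkg, hkgh⟩
    obtain ⟨f, hf, hfk⟩ := hsurj g y hy.1 x hx.1 k hkg
    refine ⟨f, ⟨hf, ?_⟩, hfk⟩
    -- show f ∈ I h y x
    have hkgh' : k ∈ a.I (𝒢.inv (𝒢.inv (𝒢.mul g h))) (a.act₀ g y) (a.act₀ g x) := by
      rw [𝒢.inv_inv']; exact hkgh
    have hm := hv (𝒢.inv (𝒢.mul g h)) g (stmt4_comp_invmul_g 𝒢 hc)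
      (a.act₀ g y) (a.act₀ g x) k hkg hkgh'
    rw [stmt4_inv_invmul_g 𝒢 hc] at hm
    rw [← hfk] at hm
    -- HEq (act (inv g) (act g f)) f
    have hgf_mem : a.act g f ∈ a.I (𝒢.inv (𝒢.inv g)) (a.act₀ g y) (a.act₀ g x) := by
      rw [𝒢.inv_inv']; rw [hfk]; exact hkg
    have heq1 := hvi (𝒢.inv g) g (𝒢.comp_inv_left g) y x f hf hgf_mem
    have hfe : f ∈ a.I (𝒢.mul (𝒢.inv g) g) y x := by
      have := (hidealin (𝒢.inv g)).1 y x hf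
      have hre : 𝒢.r (𝒢.inv g) = 𝒢.mul (𝒢.inv g) g := by
        show 𝒢.mul (𝒢.inv g) (𝒢.inv (𝒢.inv g)) = _
        rw [𝒢.inv_inv']
      rwa [hre] at this
    have heq2 := hid (𝒢.mul (𝒢.inv g) g) ⟨g, rfl⟩ y x f hfe
    exact stmt4_mem_transfer C (a.I h) hy' hx' (heq1.trans heq2) hm
end
end

section
/- Let α = (I^g, α^g)_{g∈mor(𝒢)} be a partial action of a groupoid 𝒢 on an R-semicategory C such that _xI^e_x contains an identity element for all x ∈ C₀ and e ∈ 𝒢₀. If (C,α) admits a globalization (D, β, (φ_e)_{e∈𝒢₀}), then for every g ∈ mor(𝒢) and every x ∈ C₀ the R-module _xI^g_x contains a local identity element. -/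
open scoped Classical

noncomputable section

universe u u₂ v v' w w'

variable {R : Type u} [CommRing R] {G : Type u₂} {Ob : Type v}

section Stmt6Helpers

variable {R : Type u} [CommRing R]

theorem heqComp {Ob : Type v} (D : RSemicat.{u, v, w} R Ob) {z z' y y' x x' : Ob}
    (hz : z = z') (hy : y = y') (hx : x = x')
    {f : D.Hom z y} {f' : D.Hom z' y'} {k : D.Hom y x} {k' : D.Hom y' x'}
    (hf : HEq f f') (hk : HEq k k') : HEq (D.comp f k) (D.comp f' k') := by
  subst hz; subst hy; subst hx
  rw [eq_of_heq hf, eq_of_heq hk]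

theorem heqMem {Ob : Type v} {D : RSemicat.{u, v, w} R Ob}
    (I : ∀ y x : Ob, Submodule R (D.Hom y x)) {y y' x x' : Ob}
    (hy : y = y') (hx : x = x') {f : D.Hom y x} {f' : D.Hom y' x'}
    (hf : HEq f f') : f ∈ I y x ↔ f' ∈ I y' x' := by
  subst hy; subst hx; rw [eq_of_heq hf]

theorem heqZero {Ob : Type v} (D : RSemicat.{u, v, w} R Ob) {y y' x x' : Ob}
    (hy : y = y') (hx : x = x') : HEq (0 : D.Hom y x) (0 : D.Hom y' x') := by
  subst hy; subst hx; rfl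

theorem heqActCongr {G : Type u₂} {Ob : Type v} {C : RSemicat.{u, v, w} R Ob}
    (a : SemicatActionData R G C) (g : G) {y y' x x' : Ob}
    (hy : y = y') (hx : x = x') {f : C.Hom y x} {f' : C.Hom y' x'}
    (hf : HEq f f') : HEq (a.act g f) (a.act g f') := by
  subst hy; subst hx; rw [eq_of_heq hf]

theorem heqPhiCongr {G : Type u₂} {Ob : Type v} {Ob' : Type v'}
    {C : RSemicat.{u, v, w} R Ob} {D : RSemicat.{u, v', w'} R Ob'}
    (gd : GlobalizationData R G C D) (e : G) {y y' x x' : Ob}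
    (hy : y = y') (hx : x = x') {f : C.Hom y x} {f' : C.Hom y' x'}
    (hf : HEq f f') : HEq (gd.φ e f) (gd.φ e f') := by
  subst hy; subst hx; rw [eq_of_heq hf]

end Stmt6Helpers

/-- (Necessity in the globalization theorem.) Let `α` be a
partial action of a groupoid `𝒢` on an `R`-semicategory `C` such that
`_xI^e_x` contains an identity element for all `x ∈ C₀`, `e ∈ 𝒢₀`. If
`(C, α)` admits a globalization, then for every morphism `g` and every
object `x`, the `R`-module `_xI^g_x` contains a local identity element. -/
theorem stmt6 {R : Type u} [CommRing R] {G : Type u₂} {Ob : Type v} {Ob' : Type v'}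
    (𝒢 : AlgGroupoid G) (C : RSemicat.{u, v, w} R Ob) (a : SemicatActionData R G C)
    (hpa : IsSemicatPartialAction 𝒢 C a)
    (hid : ∀ e ∈ 𝒢.units, ∀ x : Ob, ∃ u ∈ a.I e x x, C.IsLocalIdentity (a.I e) x u)
    (D : RSemicat.{u, v', w'} R Ob') (gd : GlobalizationData R G C D)
    (hg : IsGlobalization 𝒢 C a D gd) :
    ∀ (g : G) (x : Ob), ∃ u ∈ a.I g x x, C.IsLocalIdentity (a.I g) x u := by
  obtain ⟨hset, hvan, hIdealIn, hIdeal, hactmem, hactadd, hactsmul, hactinj,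
    hactsurj, hactmul, hacte, hactv, hactvi⟩ := hpa
  obtain ⟨ιinj, hbpa, hbgl, hobj_e, hobj_g, hobj_act, hφ, himL, himR, hiii, hiv, hv⟩ := hg
  obtain ⟨hbset, hbvan, hbIdealIn, hbIdeal, hbactmem, hbactadd, hbactsmul, hbactinj,
    hbactsurj, hbactmul, hbacte, hbactv, hbactvi⟩ := hbpa
  intro g x
  by_cases hx : x ∈ a.D₀ g
  case neg =>
    refine ⟨0, zero_mem _, ?_, ?_⟩
    · intro y f hf
      have hb : a.I g x y = ⊥ := hvan g x y (fun h => hx h.1)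
      rw [hb, Submodule.mem_bot] at hf
      rw [hf]
      exact C.comp_zero_left 0
    · intro y f hf
      have hb : a.I g y x = ⊥ := hvan g y x (fun h => hx h.2)
      rw [hb, Submodule.mem_bot] at hf
      rw [hf]
      exact C.comp_zero_left 0
  case pos =>
    -- groupoid identities
    have hd : 𝒢.d g = 𝒢.mul (𝒢.inv g) g := rfl
    have hr : 𝒢.r g = 𝒢.mul g (𝒢.inv g) := rfl
    have hinvd : 𝒢.inv (𝒢.mul (𝒢.inv g) g) = 𝒢.mul (𝒢.inv g) g := by
      rw [𝒢.inv_mul' _ _ (𝒢.comp_inv_left g), 𝒢.inv_inv']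
    have hinvr : 𝒢.inv (𝒢.mul g (𝒢.inv g)) = 𝒢.mul g (𝒢.inv g) := by
      rw [𝒢.inv_mul' _ _ (𝒢.comp_inv_right g), 𝒢.inv_inv']
    have hrgi : 𝒢.r (𝒢.inv g) = 𝒢.d g := by
      simp only [AlgGroupoid.r, AlgGroupoid.d, 𝒢.inv_inv']
    have hρu : 𝒢.r g ∈ 𝒢.units :=
      ⟨𝒢.inv g, by simp only [AlgGroupoid.r, AlgGroupoid.d, 𝒢.inv_inv']⟩
    have hδu : 𝒢.d g ∈ 𝒢.units := ⟨g, rfl⟩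
    -- ideal inclusions
    have hsubg := (hIdealIn g).1
    have hsubgi := (hIdealIn (𝒢.inv g)).1
    simp only [hrgi] at hsubgi
    have hbsubg := (hbIdealIn g).1
    have hbsubgi := (hbIdealIn (𝒢.inv g)).1
    simp only [hrgi] at hbsubgi
    -- globality consequences
    have hδsub : ∀ (P Q : Ob') (F : D.Hom P Q), F ∈ gd.b.I (𝒢.d g) P Q →
        F ∈ gd.b.I (𝒢.inv g) P Q ∧
        gd.b.act g F ∈ gd.b.I g (gd.b.act₀ g P) (gd.b.act₀ g Q) := by
      intro P Q F hF
      have h := (hbgl.2 (𝒢.inv g) g (𝒢.comp_inv_left g) P Q F).1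
      rw [hinvd, ← hd, 𝒢.inv_inv'] at h
      exact h.mp hF
    have hρsub : ∀ (P Q : Ob') (F : D.Hom P Q), F ∈ gd.b.I (𝒢.r g) P Q →
        F ∈ gd.b.I g P Q ∧
        gd.b.act (𝒢.inv g) F ∈
          gd.b.I (𝒢.inv g) (gd.b.act₀ (𝒢.inv g) P) (gd.b.act₀ (𝒢.inv g) Q) := by
      intro P Q F hF
      have h := (hbgl.2 g (𝒢.inv g) (𝒢.comp_inv_right g) P Q F).1
      rw [hinvr, ← hr, 𝒢.inv_inv'] at h
      exact h.mp hF
    -- local identities of I^{r g} and I^{d g}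
    obtain ⟨e, he, heL, heR⟩ := hid (𝒢.r g) hρu x
    obtain ⟨e', he', he'L, he'R⟩ := hid (𝒢.d g) hδu (a.act₀ (𝒢.inv g) x)
    -- object facts
    have hobj : ∀ y, y ∈ a.D₀ g →
        a.act₀ (𝒢.inv g) y ∈ a.D₀ (𝒢.inv g) ∧
        a.act₀ g (a.act₀ (𝒢.inv g) y) = y ∧
        gd.ι (a.act₀ (𝒢.inv g) y) = gd.b.act₀ (𝒢.inv g) (gd.ι y) ∧
        gd.b.act₀ g (gd.ι (a.act₀ (𝒢.inv g) y)) = gd.ι y := by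
      intro y hy
      have h5 := hset.2.2.2.2.1 (𝒢.inv g)
      rw [𝒢.inv_inv'] at h5
      have h6 := hset.2.2.2.2.2.1 (𝒢.inv g)
      rw [𝒢.inv_inv'] at h6
      have ha := hobj_act (𝒢.inv g)
      rw [𝒢.inv_inv'] at ha
      have h1 := h5 y hy
      have h2 := h6 y hy
      have h3 := ha y hy
      have hb := hobj_act g (a.act₀ (𝒢.inv g) y) h1
      rw [h2] at hb
      exact ⟨h1, h2, h3, hb.symm⟩
    obtain ⟨hx1, hx2, hx3, hx4⟩ := hobj x hx
    -- zero maps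
    have hφzero : ∀ t, t ∈ 𝒢.units → ∀ (y₀ x₀ : Ob), gd.φ t (0 : C.Hom y₀ x₀) = 0 := by
      intro t ht y₀ x₀
      have h := (hφ t ht).1 y₀ x₀ 0 0 (zero_mem _) (zero_mem _)
      rw [add_zero] at h
      have h2 : gd.φ t (0 : C.Hom y₀ x₀) + gd.φ t (0 : C.Hom y₀ x₀)
          = gd.φ t (0 : C.Hom y₀ x₀) + 0 := by rw [add_zero]; exact h.symm
      exact add_left_cancel h2
    have hbactzero : ∀ (t : G) (P Q : Ob'), gd.b.act t (0 : D.Hom P Q) = 0 := by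
      intro t P Q
      have h := hbactadd t P Q 0 0 (zero_mem _) (zero_mem _)
      rw [add_zero] at h
      have h2 : gd.b.act t (0 : D.Hom P Q) + gd.b.act t (0 : D.Hom P Q)
          = gd.b.act t (0 : D.Hom P Q) + 0 := by rw [add_zero]; exact h.symm
      exact add_left_cancel h2
    -- φ-memberships
    have hφρ := hφ (𝒢.r g) hρu
    have hφδ := hφ (𝒢.d g) hδu
    have hφeρ : gd.φ (𝒢.r g) e ∈ gd.b.I (𝒢.r g) (gd.ι x) (gd.ι x) :=
      hφρ.2.2.2.2 x x e he
    have hφe'δ : gd.φ (𝒢.d g) e' ∈ gd.b.I (𝒢.d g) (gd.ι (a.act₀ (𝒢.inv g) x))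
        (gd.ι (a.act₀ (𝒢.inv g) x)) := hφδ.2.2.2.2 _ _ e' he'
    obtain ⟨hφe'gi, hβe'g⟩ := hδsub _ _ _ hφe'δ
    obtain ⟨hφeg, hβgie⟩ := hρsub _ _ _ hφeρ
    -- E' = β^g(φ_{d g}(e')) transported to (ι x, ι x)
    have hc1 : D.Hom (gd.b.act₀ g (gd.ι (a.act₀ (𝒢.inv g) x)))
        (gd.b.act₀ g (gd.ι (a.act₀ (𝒢.inv g) x))) = D.Hom (gd.ι x) (gd.ι x) := by
      rw [hx4]
    set E' : D.Hom (gd.ι x) (gd.ι x) := cast hc1 (gd.b.act g (gd.φ (𝒢.d g) e')) with hE'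
    have hE'heq : HEq E' (gd.b.act g (gd.φ (𝒢.d g) e')) := by
      rw [hE']; exact cast_heq _ _
    have hE'memg : E' ∈ gd.b.I g (gd.ι x) (gd.ι x) :=
      (heqMem (gd.b.I g) hx4 hx4 hE'heq.symm).mp hβe'g
    have hE'memρ : E' ∈ gd.b.I (𝒢.r g) (gd.ι x) (gd.ι x) := hbsubg _ _ hE'memg
    -- F = β^{g⁻¹}(φ_{r g}(e)) transported to (ι x', ι x')
    have hc2 : D.Hom (gd.b.act₀ (𝒢.inv g) (gd.ι x)) (gd.b.act₀ (𝒢.inv g) (gd.ι x)) =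
        D.Hom (gd.ι (a.act₀ (𝒢.inv g) x)) (gd.ι (a.act₀ (𝒢.inv g) x)) := by
      rw [hx3]
    set F : D.Hom (gd.ι (a.act₀ (𝒢.inv g) x)) (gd.ι (a.act₀ (𝒢.inv g) x)) :=
      cast hc2 (gd.b.act (𝒢.inv g) (gd.φ (𝒢.r g) e)) with hF
    have hFheq : HEq F (gd.b.act (𝒢.inv g) (gd.φ (𝒢.r g) e)) := by
      rw [hF]; exact cast_heq _ _
    have hFmemgi : F ∈ gd.b.I (𝒢.inv g) (gd.ι (a.act₀ (𝒢.inv g) x))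
        (gd.ι (a.act₀ (𝒢.inv g) x)) :=
      (heqMem (gd.b.I (𝒢.inv g)) hx3.symm hx3.symm hFheq.symm).mp hβgie
    have hFmemδ : F ∈ gd.b.I (𝒢.d g) (gd.ι (a.act₀ (𝒢.inv g) x))
        (gd.ι (a.act₀ (𝒢.inv g) x)) := hbsubgi _ _ hFmemgi
    -- k and k'
    set k : D.Hom (gd.ι x) (gd.ι x) := D.comp E' (gd.φ (𝒢.r g) e) with hk
    set k' : D.Hom (gd.ι (a.act₀ (𝒢.inv g) x)) (gd.ι (a.act₀ (𝒢.inv g) x)) :=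
      D.comp (gd.φ (𝒢.d g) e') F with hk'
    have hstep1 : gd.b.act g k' =
        D.comp (gd.b.act g (gd.φ (𝒢.d g) e')) (gd.b.act g F) := by
      rw [hk']
      exact hbactmul g _ _ _ _ _ hφe'gi hFmemgi
    have hstepF : HEq (gd.b.act g F) (gd.φ (𝒢.r g) e) := by
      have h1 : HEq (gd.b.act g F) (gd.b.act g (gd.b.act (𝒢.inv g) (gd.φ (𝒢.r g) e))) :=
        heqActCongr gd.b g hx3 hx3 hFheq
      have h2 := hbactvi g (𝒢.inv g) (𝒢.comp_inv_right g) (gd.ι x) (gd.ι x)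
        (gd.φ (𝒢.r g) e) (by rw [𝒢.inv_inv']; exact hφeg) hβgie
      have h3 : HEq (gd.b.act (𝒢.mul g (𝒢.inv g)) (gd.φ (𝒢.r g) e)) (gd.φ (𝒢.r g) e) := by
        rw [← hr]
        exact hbacte (𝒢.r g) hρu _ _ _ hφeρ
      exact (h1.trans h2).trans h3
    have hβk'k : HEq (gd.b.act g k') k := by
      rw [hstep1, hk]
      exact heqComp D hx4 hx4 hx4 hE'heq.symm hstepF
    -- conjunct 1
    have himφe : ImageMem C D gd.ι (a.I (𝒢.r g)) (gd.φ (𝒢.r g)) (gd.φ (𝒢.r g) e) :=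
      Or.inr ⟨x, x, e, he, rfl, rfl, HEq.rfl⟩
    have himk := himL (𝒢.r g) hρu _ _ _ E' (gd.φ (𝒢.r g) e) hE'memρ himφe
    rw [← hk] at himk
    have hconj1 : ∃ f ∈ a.I (𝒢.r g) x x, gd.φ (𝒢.r g) f = k := by
      rcases himk with h0 | ⟨y0, x0, f0, hf0, hy0, hx0, hheq⟩
      · exact ⟨0, zero_mem _, by rw [hφzero (𝒢.r g) hρu x x, h0]⟩
      · have hy0' : y0 = x := ιinj hy0
        have hx0' : x0 = x := ιinj hx0
        have hcast : C.Hom y0 x0 = C.Hom x x := by rw [hy0', hx0']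
        refine ⟨cast hcast f0, (heqMem (a.I (𝒢.r g)) hy0' hx0'
          (cast_heq hcast f0).symm).mp hf0, ?_⟩
        exact eq_of_heq ((heqPhiCongr gd (𝒢.r g) hy0'.symm hx0'.symm
          (cast_heq hcast f0)).trans hheq)
    -- conjunct 2
    have himφe' : ImageMem C D gd.ι (a.I (𝒢.d g)) (gd.φ (𝒢.d g)) (gd.φ (𝒢.d g) e') :=
      Or.inr ⟨_, _, e', he', rfl, rfl, HEq.rfl⟩
    have himk' := himR (𝒢.d g) hδu _ _ _ (gd.φ (𝒢.d g) e') F himφe' hFmemδ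
    rw [← hk'] at himk'
    have hconj2 : ∃ f' : C.Hom (a.act₀ (𝒢.inv g) x) (a.act₀ (𝒢.inv g) x),
        f' ∈ a.I (𝒢.d g) (a.act₀ (𝒢.inv g) x) (a.act₀ (𝒢.inv g) x) ∧
        HEq (gd.b.act g (gd.φ (𝒢.d g) f')) k := by
      rcases himk' with h0 | ⟨y0, x0, f0, hf0, hy0, hx0, hheq⟩
      · refine ⟨0, zero_mem _, ?_⟩
        rw [hφzero (𝒢.d g) hδu _ _, hbactzero]
        have hk0 : k = 0 := by
          have hthis := hβk'k
          rw [h0, hbactzero] at hthis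
          exact (eq_of_heq ((heqZero D hx4 hx4).symm.trans hthis)).symm
        rw [hk0]
        exact heqZero D hx4 hx4
      · obtain rfl : y0 = a.act₀ (𝒢.inv g) x := ιinj hy0
        obtain rfl : x0 = a.act₀ (𝒢.inv g) x := ιinj hx0
        refine ⟨f0, hf0, ?_⟩
        have hφf0k' : gd.φ (𝒢.d g) f0 = k' := eq_of_heq hheq
        rw [hφf0k']
        exact hβk'k
    obtain ⟨u, hu, hφuk⟩ := (hiii g x hx x hx k).mpr ⟨hconj1, hconj2⟩
    refine ⟨u, hu, ?_, ?_⟩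
    · intro y f hf
      by_cases hyD : y ∈ a.D₀ g
      case neg =>
        have hb : a.I g x y = ⊥ := hvan g x y (fun h => hyD h.2)
        rw [hb, Submodule.mem_bot] at hf
        rw [hf]
        exact C.comp_zero_right u
      case pos =>
        obtain ⟨hy1, hy2, hy3, hy4⟩ := hobj y hyD
        have hcf : C.Hom x y =
            C.Hom (a.act₀ g (a.act₀ (𝒢.inv g) x)) (a.act₀ g (a.act₀ (𝒢.inv g) y)) := by
          rw [hx2, hy2]
        have hfheq : HEq (cast hcf f) f := cast_heq _ _
        have hfmem : cast hcf f ∈ a.I g (a.act₀ g (a.act₀ (𝒢.inv g) x))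
            (a.act₀ g (a.act₀ (𝒢.inv g) y)) :=
          (heqMem (a.I g) hx2 hy2 hfheq).mpr hf
        obtain ⟨f0, hf0, hf0act⟩ := hactsurj g _ hx1 _ hy1 _ hfmem
        have hf0δ := hsubgi _ _ hf0
        have he'f0 : C.comp e' f0 = f0 := he'L _ f0 hf0δ
        have hφf0δ := hφδ.2.2.2.2 _ _ f0 hf0δ
        have hφf0gi := (hδsub _ _ _ hφf0δ).1
        have habs : D.comp E' (gd.φ (𝒢.r g) f) = gd.φ (𝒢.r g) f := by
          have hm : D.comp (gd.b.act g (gd.φ (𝒢.d g) e')) (gd.b.act g (gd.φ (𝒢.d g) f0)) =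
              gd.b.act g (gd.φ (𝒢.d g) f0) := by
            rw [← hbactmul g _ _ _ _ _ hφe'gi hφf0gi,
              ← hφδ.2.2.1 _ _ _ e' f0 he' hf0δ, he'f0]
          have h3 : HEq (gd.b.act g (gd.φ (𝒢.d g) f0)) (gd.φ (𝒢.r g) f) := by
            have h := hiv g _ _ f0 hf0
            rw [hf0act] at h
            exact h.trans (heqPhiCongr gd (𝒢.r g) hx2 hy2 hfheq)
          have hh : HEq (D.comp E' (gd.φ (𝒢.r g) f))
              (D.comp (gd.b.act g (gd.φ (𝒢.d g) e')) (gd.b.act g (gd.φ (𝒢.d g) f0))) :=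
            heqComp D hx4.symm hx4.symm hy4.symm hE'heq h3.symm
          exact eq_of_heq ((hh.trans (heq_of_eq hm)).trans h3)
        have hufρ : C.comp u f ∈ a.I (𝒢.r g) x y := (hIdeal g).1 x x y u f (hsubg _ _ hf)
        apply hφρ.2.2.2.1 x y _ f hufρ (hsubg _ _ hf)
        rw [hφρ.2.2.1 _ _ _ u f (hsubg _ _ hu) (hsubg _ _ hf), hφuk, hk, D.comp_assoc,
          ← hφρ.2.2.1 _ _ _ e f he (hsubg _ _ hf), heL y f (hsubg _ _ hf), habs]
    · intro y f hf
      by_cases hyD : y ∈ a.D₀ g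
      case neg =>
        have hb : a.I g y x = ⊥ := hvan g y x (fun h => hyD h.1)
        rw [hb, Submodule.mem_bot] at hf
        rw [hf]
        exact C.comp_zero_left u
      case pos =>
        obtain ⟨hy1, hy2, hy3, hy4⟩ := hobj y hyD
        have hcf : C.Hom y x =
            C.Hom (a.act₀ g (a.act₀ (𝒢.inv g) y)) (a.act₀ g (a.act₀ (𝒢.inv g) x)) := by
          rw [hx2, hy2]
        have hfheq : HEq (cast hcf f) f := cast_heq _ _
        have hfmem : cast hcf f ∈ a.I g (a.act₀ g (a.act₀ (𝒢.inv g) y))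
            (a.act₀ g (a.act₀ (𝒢.inv g) x)) :=
          (heqMem (a.I g) hy2 hx2 hfheq).mpr hf
        obtain ⟨f0, hf0, hf0act⟩ := hactsurj g _ hy1 _ hx1 _ hfmem
        have hf0δ := hsubgi _ _ hf0
        have hf0e' : C.comp f0 e' = f0 := he'R _ f0 hf0δ
        have hφf0δ := hφδ.2.2.2.2 _ _ f0 hf0δ
        have hφf0gi := (hδsub _ _ _ hφf0δ).1
        have habs : D.comp (gd.φ (𝒢.r g) f) E' = gd.φ (𝒢.r g) f := by
          have hm : D.comp (gd.b.act g (gd.φ (𝒢.d g) f0)) (gd.b.act g (gd.φ (𝒢.d g) e')) =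
              gd.b.act g (gd.φ (𝒢.d g) f0) := by
            rw [← hbactmul g _ _ _ _ _ hφf0gi hφe'gi,
              ← hφδ.2.2.1 _ _ _ f0 e' hf0δ he', hf0e']
          have h3 : HEq (gd.b.act g (gd.φ (𝒢.d g) f0)) (gd.φ (𝒢.r g) f) := by
            have h := hiv g _ _ f0 hf0
            rw [hf0act] at h
            exact h.trans (heqPhiCongr gd (𝒢.r g) hy2 hx2 hfheq)
          have hh : HEq (D.comp (gd.φ (𝒢.r g) f) E')
              (D.comp (gd.b.act g (gd.φ (𝒢.d g) f0)) (gd.b.act g (gd.φ (𝒢.d g) e'))) :=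
            heqComp D hy4.symm hx4.symm hx4.symm h3.symm hE'heq
          exact eq_of_heq ((hh.trans (heq_of_eq hm)).trans h3)
        have hufρ : C.comp f u ∈ a.I (𝒢.r g) y x := (hIdeal g).2 y x x f u (hsubg _ _ hf)
        apply hφρ.2.2.2.1 y x _ f hufρ (hsubg _ _ hf)
        rw [hφρ.2.2.1 _ _ _ f u (hsubg _ _ hf) (hsubg _ _ hu), hφuk, hk, ← D.comp_assoc,
          habs, ← hφρ.2.2.1 _ _ _ f e (hsubg _ _ hf) he, heR y f (hsubg _ _ hf)]
end
end
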